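/- If f ∈ TU_H(α), i.e., f(z) = z - Σ_{n≥2}A_n z^n + conj(Σ_{n≥1}B_n z^n) with A_n,B_n ≥ 0 and Σ_{n≥2}A_n + Σ_{n≥1}B_n ≤ 1-α, then for all z in the unit disk: (1-B_1)|z| - (1-α-B_1)|z|^2 ≤ |f(z)| ≤ (1+B_1)|z| + (1-α-B_1)|z|^2. In particular, f(D) contains the open disk {|w| < α}. -/

import Mathlib

open Complex


/-- Two-sided bound on `s^(m+1) - r^(m+1)`. -/
lemma TUH.pow_diff_bounds {r s : ℝ} (h0 : 0 ≤ r) (hrs : r ≤ s) (m : ℕ) :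
    ((m:ℝ)+1) * r ^ m * (s - r) ≤ s ^ (m+1) - r ^ (m+1) ∧
    s ^ (m+1) - r ^ (m+1) ≤ ((m:ℝ)+1) * s ^ m * (s - r) := by
  have hs0 : 0 ≤ s := le_trans h0 hrs
  induction m with
  | zero => constructor <;> simp
  | succ m ih =>
    obtain ⟨ih1, ih2⟩ := ih
    have hrm : r ^ (m+1) ≤ s ^ (m+1) := pow_le_pow_left₀ h0 hrs _
    have hrm' : (0:ℝ) ≤ r ^ (m+1) := pow_nonneg h0 _
    have key : s ^ (m+2) - r ^ (m+2) = s * (s^(m+1) - r^(m+1)) + (s - r) * r^(m+1) := by ring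
    have e1 : r * (((m:ℝ)+1) * r ^ m * (s - r)) = ((m:ℝ)+1) * r^(m+1) * (s-r) := by
      rw [pow_succ]; ring
    have e2 : s * (((m:ℝ)+1) * s ^ m * (s - r)) = ((m:ℝ)+1) * s^(m+1) * (s-r) := by
      rw [pow_succ]; ring
    constructor
    · have h1 : r * (s^(m+1) - r^(m+1)) ≤ s * (s^(m+1) - r^(m+1)) := by nlinarith
      have h1' : r * (((m:ℝ)+1) * r ^ m * (s - r)) ≤ r * (s^(m+1) - r^(m+1)) :=
        mul_le_mul_of_nonneg_left ih1 h0
      push_cast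
      have goal_eq : ((m:ℝ)+1+1) * r^(m+1) * (s-r) = ((m:ℝ)+1) * r^(m+1) * (s-r) + r^(m+1)*(s-r) := by ring
      rw [show m+1+1 = m+2 from rfl, goal_eq, key]
      nlinarith [e1]
    · have h1 : s * (s^(m+1) - r^(m+1)) ≤ s * (((m:ℝ)+1) * s ^ m * (s - r)) :=
        mul_le_mul_of_nonneg_left ih2 hs0
      have h2 : (s - r) * r^(m+1) ≤ (s - r) * s^(m+1) :=
        mul_le_mul_of_nonneg_left hrm (by linarith)
      push_cast
      have goal_eq : ((m:ℝ)+1+1) * s^(m+1) * (s-r) = ((m:ℝ)+1) * s^(m+1) * (s-r) + (s-r)*s^(m+1) := by ring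
      rw [show m+1+1 = m+2 from rfl, goal_eq, key]
      linarith [e2]

/-- Lipschitz bound for powers on a disk. -/
lemma TUH.norm_pow_sub_pow {z z' : ℂ} {r : ℝ} (hz : ‖z‖ ≤ r) (hz' : ‖z'‖ ≤ r) (m : ℕ) :
    ‖z ^ (m+1) - z' ^ (m+1)‖ ≤ ((m:ℝ)+1) * r ^ m * ‖z - z'‖ := by
  have hr0 : 0 ≤ r := le_trans (norm_nonneg z) hz
  induction m with
  | zero => simp
  | succ m ih =>
    have key : z ^ (m+2) - z' ^ (m+2) = z * (z^(m+1) - z'^(m+1)) + (z - z') * z'^(m+1) := by ring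
    calc ‖z ^ (m+2) - z' ^ (m+2)‖
        ≤ ‖z * (z^(m+1) - z'^(m+1))‖ + ‖(z - z') * z'^(m+1)‖ := by rw [key]; exact norm_add_le _ _
      _ = ‖z‖ * ‖z^(m+1) - z'^(m+1)‖ + ‖z - z'‖ * ‖z'‖^(m+1) := by rw [norm_mul, norm_mul, norm_pow]
      _ ≤ r * (((m:ℝ)+1) * r ^ m * ‖z - z'‖) + ‖z - z'‖ * r^(m+1) := by gcongr
      _ = ((↑(m+1):ℝ)+1) * r ^ (m+1) * ‖z - z'‖ := by push_cast; rw [pow_succ]; ring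


section TUHaux
variable {b : ℝ} {c : ℕ → ℝ}

lemma TUH.sumK (hc : ∀ n, 0 ≤ c n) (hS : Summable c) {r : ℝ} (h0 : 0 ≤ r) (h1 : r < 1) :
    Summable fun n : ℕ => ((n:ℝ)+2) * c n * r^(n+1) := by
  have hgeo : Summable fun n : ℕ => r^n := summable_geometric_of_lt_one h0 h1
  have hng : Summable fun n : ℕ => (n:ℝ) * r^n := by
    simpa using summable_pow_mul_geometric_of_norm_lt_one 1
      (by rwa [Real.norm_eq_abs, _root_.abs_of_nonneg h0])
  have hBnd : Summable fun n : ℕ => ((n:ℝ)+2) * r^(n+1) := by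
    have := (hng.mul_left r).add (hgeo.mul_left (2*r))
    apply this.congr
    intro n; rw [pow_succ]; ring
  set C := ∑' n, c n with hC
  refine Summable.of_nonneg_of_le (fun n => ?_) (fun n => ?_) (hBnd.mul_left C)
  · have := hc n
    positivity
  · have hle : c n ≤ C := Summable.le_tsum hS n (fun j _ => hc j)
    have hpos : (0:ℝ) ≤ ((n:ℝ)+2) * r^(n+1) := by positivity
    calc ((n:ℝ)+2) * c n * r^(n+1) = (((n:ℝ)+2) * r^(n+1)) * c n := by ring
      _ ≤ (((n:ℝ)+2) * r^(n+1)) * C := mul_le_mul_of_nonneg_left hle hpos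
      _ = C * (((n:ℝ)+2) * r^(n+1)) := by ring

lemma TUH.sumP (hc : ∀ n, 0 ≤ c n) (hS : Summable c) {r : ℝ} (h0 : 0 ≤ r) (h1 : r ≤ 1) :
    Summable fun n : ℕ => c n * r^(n+2) := by
  refine Summable.of_nonneg_of_le (fun n => ?_) (fun n => ?_) hS
  · have := hc n; positivity
  · have : r^(n+2) ≤ 1 := pow_le_one₀ h0 h1
    calc c n * r^(n+2) ≤ c n * 1 := mul_le_mul_of_nonneg_left this (hc n)
      _ = c n := mul_one _

lemma TUH.Knonneg (hb : 0 ≤ b) (hc : ∀ n, 0 ≤ c n) (r : ℝ) (h0 : 0 ≤ r) :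
    0 ≤ b + ∑' n : ℕ, ((n:ℝ)+2) * c n * r^(n+1) := by
  have : 0 ≤ ∑' n : ℕ, ((n:ℝ)+2) * c n * r^(n+1) := by
    apply tsum_nonneg; intro n; have := hc n; positivity
  linarith

lemma TUH.diff_bounds (hb : 0 ≤ b) (hc : ∀ n, 0 ≤ c n) (hS : Summable c)
    {r s : ℝ} (h0 : 0 ≤ r) (hrs : r ≤ s) (h1 : s < 1) :
    (b + ∑' n : ℕ, ((n:ℝ)+2) * c n * r^(n+1)) * (s - r)
      ≤ (b * s + ∑' n : ℕ, c n * s^(n+2)) - (b * r + ∑' n : ℕ, c n * r^(n+2)) := by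
  have hs0 : 0 ≤ s := le_trans h0 hrs
  have hr1 : r < 1 := lt_of_le_of_lt hrs h1
  have hPs := TUH.sumP hc hS hs0 h1.le
  have hPr := TUH.sumP hc hS h0 hr1.le
  have hKr := TUH.sumK hc hS h0 hr1
  have hΔ : (∑' n : ℕ, c n * s^(n+2)) - (∑' n : ℕ, c n * r^(n+2))
      = ∑' n : ℕ, c n * (s^(n+2) - r^(n+2)) := by
    rw [← Summable.tsum_sub hPs hPr]
    congr 1; funext n; ring
  have hterm : ∀ n : ℕ, (((n:ℝ)+2) * c n * r^(n+1)) * (s - r) ≤ c n * (s^(n+2) - r^(n+2)) := by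
    intro n
    have h := (TUH.pow_diff_bounds h0 hrs (n+1)).1
    push_cast at h
    have := mul_le_mul_of_nonneg_left h (hc n)
    calc (((n:ℝ)+2) * c n * r^(n+1)) * (s - r)
        = c n * (((n:ℝ)+1+1) * r^(n+1) * (s - r)) := by ring
      _ ≤ c n * (s^(n+1+1) - r^(n+1+1)) := this
      _ = c n * (s^(n+2) - r^(n+2)) := by norm_num
  have hsum1 : Summable fun n : ℕ => (((n:ℝ)+2) * c n * r^(n+1)) * (s - r) := hKr.mul_right _
  have hsum2 : Summable fun n : ℕ => c n * (s^(n+2) - r^(n+2)) := by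
    apply (hPs.sub hPr).congr
    intro n; ring
  have hts : ∑' n : ℕ, (((n:ℝ)+2) * c n * r^(n+1)) * (s - r)
      ≤ ∑' n : ℕ, c n * (s^(n+2) - r^(n+2)) := Summable.tsum_le_tsum hterm hsum1 hsum2
  rw [tsum_mul_right] at hts
  -- ‹tsum (K-part) * (s-r)› ≤ Δ
  have : (b * s + ∑' n : ℕ, c n * s^(n+2)) - (b * r + ∑' n : ℕ, c n * r^(n+2))
      = b * (s - r) + ((∑' n : ℕ, c n * s^(n+2)) - (∑' n : ℕ, c n * r^(n+2))) := by ring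
  rw [this, hΔ]
  nlinarith [hts]

end TUHaux

lemma TUH.norm_tsum_mul_le {g : ℕ → ℝ} {u : ℕ → ℂ} {v : ℕ → ℝ} (hg : ∀ n, 0 ≤ g n)
    (hu : ∀ n, ‖u n‖ ≤ v n) (hv : Summable fun n => g n * v n) :
    ‖∑' n : ℕ, (g n : ℂ) * u n‖ ≤ ∑' n : ℕ, g n * v n := by
  have hnorm : ∀ n, ‖(g n : ℂ) * u n‖ ≤ g n * v n := by
    intro n
    rw [norm_mul, Complex.norm_real, Real.norm_eq_abs, _root_.abs_of_nonneg (hg n)]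
    exact mul_le_mul_of_nonneg_left (hu n) (hg n)
  have hsn : Summable fun n => ‖(g n : ℂ) * u n‖ :=
    Summable.of_nonneg_of_le (fun n => norm_nonneg _) hnorm hv
  calc ‖∑' n : ℕ, (g n : ℂ) * u n‖ ≤ ∑' n : ℕ, ‖(g n : ℂ) * u n‖ := norm_tsum_le_tsum_norm hsn
    _ ≤ ∑' n : ℕ, g n * v n := Summable.tsum_le_tsum hnorm hsn hv

lemma TUH.summable_mul {g : ℕ → ℝ} {u : ℕ → ℂ} {v : ℕ → ℝ} (hg : ∀ n, 0 ≤ g n)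
    (hu : ∀ n, ‖u n‖ ≤ v n) (hv : Summable fun n => g n * v n) :
    Summable fun n : ℕ => (g n : ℂ) * u n := by
  apply Summable.of_norm
  apply Summable.of_nonneg_of_le (fun n => norm_nonneg _) _ hv
  intro n
  rw [norm_mul, Complex.norm_real, Real.norm_eq_abs, _root_.abs_of_nonneg (hg n)]
  exact mul_le_mul_of_nonneg_left (hu n) (hg n)

lemma TUH.norm_pow_sub_pow' {z z' : ℂ} {r : ℝ} (hz : ‖z‖ ≤ r) (hz' : ‖z'‖ ≤ r) (n : ℕ) :
    ‖z ^ (n+2) - z' ^ (n+2)‖ ≤ ((n:ℝ)+2) * r ^ (n+1) * ‖z - z'‖ := by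
  have h := TUH.norm_pow_sub_pow hz hz' (n+1)
  have e : ((↑(n+1):ℝ)+1) = ((n:ℝ)+2) := by push_cast; ring
  rw [e] at h
  exact h

lemma TUH.exists_radius {α β b : ℝ} {c : ℕ → ℝ} (hb : 0 ≤ b) (hc : ∀ n, 0 ≤ c n)
    (hS : Summable c) (hsum : b + ∑' n : ℕ, c n ≤ 1 - α) (hβ0 : 0 ≤ β) (hβα : β < α) :
    ∃ r : ℝ, 0 ≤ r ∧ r < 1 ∧
      b + (∑' n : ℕ, ((n:ℝ)+2) * c n * r^(n+1)) < 1 ∧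
      β + (b * r + ∑' n : ℕ, c n * r^(n+2)) ≤ r := by
  have hα0 : 0 < α := lt_of_le_of_lt hβ0 hβα
  have hCnn : 0 ≤ ∑' n : ℕ, c n := tsum_nonneg hc
  have hb1 : b + (∑' n : ℕ, c n) ≤ 1 - α := hsum
  set ρ := (α + β) / (2*α) with hρdef
  have hρ0 : 0 ≤ ρ := by positivity
  have hρ1 : ρ < 1 := by
    rw [hρdef, div_lt_one (by positivity)]; linarith
  have hρβ : β < ρ * α := by
    rw [hρdef]; rw [div_mul_eq_mul_div, mul_comm]
    rw [lt_div_iff₀ (by positivity)]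
    nlinarith
  -- ψ(ρ) ≥ ρ * α
  have hφρ : b * ρ + (∑' n : ℕ, c n * ρ^(n+2)) ≤ b * ρ + (∑' n : ℕ, c n) * ρ := by
    have h1 : (∑' n : ℕ, c n * ρ^(n+2)) ≤ (∑' n : ℕ, c n * ρ^2) := by
      refine Summable.tsum_le_tsum (fun n => ?_) (TUH.sumP hc hS hρ0 hρ1.le) (hS.mul_right _)
      exact mul_le_mul_of_nonneg_left (pow_le_pow_of_le_one hρ0 hρ1.le (by omega)) (hc n)
    have h2 : (∑' n : ℕ, c n * ρ^2) = (∑' n : ℕ, c n) * ρ^2 := tsum_mul_right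
    have h3 : (∑' n : ℕ, c n) * ρ^2 ≤ (∑' n : ℕ, c n) * ρ := by
      apply mul_le_mul_of_nonneg_left _ hCnn
      nlinarith
    linarith
  have hψρ : β + (ρ * α - β) ≤ ρ - (b * ρ + (∑' n : ℕ, c n * ρ^(n+2))) := by
    have : b * ρ + (∑' n : ℕ, c n) * ρ ≤ (1 - α) * ρ := by nlinarith
    nlinarith
  set δ := ρ * α - β with hδdef
  have hδ0 : 0 < δ := by rw [hδdef]; linarith
  by_cases hKρ : b + (∑' n : ℕ, ((n:ℝ)+2) * c n * ρ^(n+1)) < 1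
  · exact ⟨ρ, hρ0, hρ1, hKρ, by linarith⟩
  · push_neg at hKρ
    set S := {r : ℝ | r ∈ Set.Icc 0 ρ ∧ 1 ≤ b + (∑' n : ℕ, ((n:ℝ)+2) * c n * r^(n+1))} with hSdef
    have hne : S.Nonempty := ⟨ρ, ⟨hρ0, le_refl _⟩, hKρ⟩
    have hbdd : BddBelow S := ⟨0, fun x hx => hx.1.1⟩
    obtain ⟨s', hs'S, hs'lt⟩ := Real.lt_sInf_add_pos hne (half_pos hδ0)
    obtain ⟨⟨hs'0, hs'ρ⟩, hKs'⟩ := hs'S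
    have hs'1 : s' < 1 := lt_of_le_of_lt hs'ρ hρ1
    -- ψ(s') ≥ ψ(ρ)
    have hD := TUH.diff_bounds hb hc hS hs'0 hs'ρ hρ1
    have hψs' : β + δ ≤ s' - (b * s' + (∑' n : ℕ, c n * s'^(n+2))) := by nlinarith
    have hφs'nn : 0 ≤ b * s' + (∑' n : ℕ, c n * s'^(n+2)) := by
      have : 0 ≤ ∑' n : ℕ, c n * s'^(n+2) := tsum_nonneg (fun n => by
        have := hc n; positivity)
      nlinarith
    have hs'ge : β + δ ≤ s' := by linarith
    set r := s' - δ with hrdef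
    have hr0 : 0 ≤ r := by rw [hrdef]; linarith
    have hrs' : r < s' := by rw [hrdef]; linarith
    have hrInf : r < sInf S := by rw [hrdef]; linarith
    have hrρ : r < ρ := lt_of_lt_of_le hrInf (csInf_le hbdd ⟨⟨hs'0, hs'ρ⟩, hKs'⟩ |>.trans hs'ρ)
    have hr1 : r < 1 := lt_trans hrρ hρ1
    have hKr : b + (∑' n : ℕ, ((n:ℝ)+2) * c n * r^(n+1)) < 1 := by
      by_contra hcon
      push_neg at hcon
      have : r ∈ S := ⟨⟨hr0, hrρ.le⟩, hcon⟩
      exact absurd (csInf_le hbdd this) (not_le.mpr hrInf)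
    have hKrnn : 0 ≤ b + (∑' n : ℕ, ((n:ℝ)+2) * c n * r^(n+1)) := TUH.Knonneg hb hc r hr0
    have hD2 := TUH.diff_bounds hb hc hS hr0 hrs'.le hs'1
    -- ψ(s') - ψ(r) ≤ (s' - r) * (1 - K r) ≤ s' - r = δ
    have hψr : β ≤ r - (b * r + (∑' n : ℕ, c n * r^(n+2))) := by nlinarith
    exact ⟨r, hr0, hr1, hKr, by linarith⟩

/-- Growth and covering for `TU_H(α)`: if `Σ_{n≥2} A_n + Σ_{n≥1} B_n ≤ 1 - α`
(`A_n, B_n ≥ 0`), then `(1-B₁)|z| - (1-α-B₁)|z|² ≤ |f(z)| ≤ (1+B₁)|z| + (1-α-B₁)|z|²`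
on the unit disk, and `f(D)` contains the disk `{|w| < α}`. -/
theorem TUH_growth_and_covering
    (α : ℝ) (hα : 0 ≤ α) (hα1 : α < 1)
    (A B : ℕ → ℝ)
    (hA : ∀ n, 2 ≤ n → 0 ≤ A n) (hB : ∀ n, 1 ≤ n → 0 ≤ B n)
    (hSA : Summable fun n : ℕ => A (n + 2))
    (hSB : Summable fun n : ℕ => B (n + 1))
    (hsum : (∑' n : ℕ, A (n + 2)) + (∑' n : ℕ, B (n + 1)) ≤ 1 - α) :
    (∀ z : ℂ, ‖z‖ < 1 →
      (1 - B 1) * ‖z‖ - (1 - α - B 1) * ‖z‖ ^ 2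
        ≤ ‖(z - ∑' n : ℕ, (A (n + 2) : ℂ) * z ^ (n + 2)
            + starRingEnd ℂ (∑' n : ℕ, (B (n + 1) : ℂ) * z ^ (n + 1)))‖ ∧
      ‖(z - ∑' n : ℕ, (A (n + 2) : ℂ) * z ^ (n + 2)
            + starRingEnd ℂ (∑' n : ℕ, (B (n + 1) : ℂ) * z ^ (n + 1)))‖
        ≤ (1 + B 1) * ‖z‖ + (1 - α - B 1) * ‖z‖ ^ 2) ∧
    (∀ w : ℂ, ‖w‖ < α → ∃ z : ℂ, ‖z‖ < 1 ∧
      (z - ∑' n : ℕ, (A (n + 2) : ℂ) * z ^ (n + 2)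
        + starRingEnd ℂ (∑' n : ℕ, (B (n + 1) : ℂ) * z ^ (n + 1))) = w) := by
  have hA2 : ∀ n : ℕ, 0 ≤ A (n+2) := fun n => hA _ (by omega)
  have hB1 : ∀ n : ℕ, 0 ≤ B (n+1) := fun n => hB _ (by omega)
  have hB2 : ∀ n : ℕ, 0 ≤ B (n+2) := fun n => hB _ (by omega)
  have hSB2 : Summable fun n : ℕ => B (n+2) := (summable_nat_add_iff 1).mpr hSB
  have hB1nn : 0 ≤ B 1 := hB 1 le_rfl
  have htsumB : ∑' n : ℕ, B (n+1) = B 1 + ∑' n : ℕ, B (n+2) := Summable.tsum_eq_zero_add hSB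
  have hAnn : 0 ≤ ∑' n : ℕ, A (n+2) := tsum_nonneg hA2
  have hB2nn : 0 ≤ ∑' n : ℕ, B (n+2) := tsum_nonneg hB2
  constructor
  · -- growth bounds
    intro z hz
    have hz1 : ‖z‖ ≤ 1 := hz.le
    have hzn : 0 ≤ ‖z‖ := norm_nonneg z
    -- bound on the A-series
    have hSAz : ‖∑' n : ℕ, (A (n+2) : ℂ) * z ^ (n+2)‖ ≤ (∑' n : ℕ, A (n+2)) * ‖z‖^2 := by
      have hv : Summable fun n : ℕ => A (n+2) * (‖z‖^2) := hSA.mul_right _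
      have h1 : ‖∑' n : ℕ, (A (n+2) : ℂ) * z ^ (n+2)‖ ≤ ∑' n : ℕ, A (n+2) * (‖z‖^2) := by
        apply TUH.norm_tsum_mul_le hA2 _ hv
        intro n
        rw [norm_pow]
        calc ‖z‖^(n+2) ≤ ‖z‖^2 := pow_le_pow_of_le_one hzn hz1 (by omega)
          _ = ‖z‖^2 := rfl
      rw [tsum_mul_right] at h1
      exact h1
    -- decompose the B-series
    have hsummBC : Summable fun n : ℕ => (B (n+1) : ℂ) * z ^ (n+1) := by
      apply TUH.summable_mul hB1 (v := fun n => ‖z‖^(n+1)) (fun n => by rw [norm_pow])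
      apply Summable.of_nonneg_of_le (fun n => by have := hB1 n; positivity) _ hSB
      intro n
      have h1 : ‖z‖^(n+1) ≤ 1 := pow_le_one₀ hzn hz1
      calc B (n+1) * ‖z‖^(n+1) ≤ B (n+1) * 1 := mul_le_mul_of_nonneg_left h1 (hB1 n)
        _ = B (n+1) := mul_one _
    have hdecB : (∑' n : ℕ, (B (n+1) : ℂ) * z ^ (n+1))
        = (B 1 : ℂ) * z + ∑' n : ℕ, (B (n+2) : ℂ) * z ^ (n+2) := by
      rw [Summable.tsum_eq_zero_add hsummBC]
      norm_num
    have hSB2z : ‖∑' n : ℕ, (B (n+2) : ℂ) * z ^ (n+2)‖ ≤ (∑' n : ℕ, B (n+2)) * ‖z‖^2 := by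
      have hv : Summable fun n : ℕ => B (n+2) * (‖z‖^2) := hSB2.mul_right _
      have h1 : ‖∑' n : ℕ, (B (n+2) : ℂ) * z ^ (n+2)‖ ≤ ∑' n : ℕ, B (n+2) * (‖z‖^2) := by
        apply TUH.norm_tsum_mul_le hB2 _ hv
        intro n
        rw [norm_pow]
        exact pow_le_pow_of_le_one hzn hz1 (by omega)
      rw [tsum_mul_right] at h1
      exact h1
    have hSBz : ‖∑' n : ℕ, (B (n+1) : ℂ) * z ^ (n+1)‖
        ≤ B 1 * ‖z‖ + (∑' n : ℕ, B (n+2)) * ‖z‖^2 := by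
      rw [hdecB]
      calc ‖(B 1 : ℂ) * z + ∑' n : ℕ, (B (n+2) : ℂ) * z ^ (n+2)‖
          ≤ ‖(B 1 : ℂ) * z‖ + ‖∑' n : ℕ, (B (n+2) : ℂ) * z ^ (n+2)‖ := norm_add_le _ _
        _ ≤ B 1 * ‖z‖ + (∑' n : ℕ, B (n+2)) * ‖z‖^2 := by
            rw [norm_mul, Complex.norm_real, Real.norm_eq_abs, _root_.abs_of_nonneg hB1nn]
            exact add_le_add_right hSB2z _
    have hcoef : (∑' n : ℕ, A (n+2)) + (∑' n : ℕ, B (n+2)) ≤ 1 - α - B 1 := by linarith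
    have hnconj : ‖starRingEnd ℂ (∑' n : ℕ, (B (n+1) : ℂ) * z ^ (n+1))‖
        = ‖∑' n : ℕ, (B (n+1) : ℂ) * z ^ (n+1)‖ := RCLike.norm_conj _
    set SA := ∑' n : ℕ, (A (n+2) : ℂ) * z ^ (n+2) with hSAset
    set SBc := ∑' n : ℕ, (B (n+1) : ℂ) * z ^ (n+1) with hSBset
    have hup : ‖z - SA + starRingEnd ℂ SBc‖ ≤ ‖z‖ + ‖SA‖ + ‖SBc‖ := by
      calc ‖z - SA + starRingEnd ℂ SBc‖ ≤ ‖z - SA‖ + ‖starRingEnd ℂ SBc‖ := norm_add_le _ _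
        _ ≤ (‖z‖ + ‖SA‖) + ‖SBc‖ := by rw [hnconj]; exact add_le_add_left (norm_sub_le _ _) _
        _ = ‖z‖ + ‖SA‖ + ‖SBc‖ := by ring
    have hlow : ‖z‖ - ‖SA‖ - ‖SBc‖ ≤ ‖z - SA + starRingEnd ℂ SBc‖ := by
      have : ‖z‖ ≤ ‖z - SA + starRingEnd ℂ SBc‖ + (‖SA‖ + ‖SBc‖) := by
        calc ‖z‖ = ‖(z - SA + starRingEnd ℂ SBc) + (SA - starRingEnd ℂ SBc)‖ := by ring_nf
          _ ≤ ‖z - SA + starRingEnd ℂ SBc‖ + ‖SA - starRingEnd ℂ SBc‖ := norm_add_le _ _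
          _ ≤ ‖z - SA + starRingEnd ℂ SBc‖ + (‖SA‖ + ‖SBc‖) := by
              have := norm_sub_le SA (starRingEnd ℂ SBc)
              rw [hnconj] at this
              linarith
      linarith
    have hsq : 0 ≤ ‖z‖^2 := sq_nonneg _
    constructor
    · nlinarith [hSAz, hSBz, hlow, norm_nonneg SA, norm_nonneg SBc]
    · nlinarith [hSAz, hSBz, hup]
  · -- covering
    intro w hw
    have hwnn : 0 ≤ ‖w‖ := norm_nonneg w
    have hc : ∀ n : ℕ, 0 ≤ A (n+2) + B (n+2) := fun n => add_nonneg (hA2 n) (hB2 n)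
    have hScsum : Summable fun n : ℕ => A (n+2) + B (n+2) := hSA.add hSB2
    have htsumc : ∑' n : ℕ, (A (n+2) + B (n+2))
        = (∑' n : ℕ, A (n+2)) + ∑' n : ℕ, B (n+2) := Summable.tsum_add hSA hSB2
    have hsum' : B 1 + ∑' n : ℕ, (A (n+2) + B (n+2)) ≤ 1 - α := by rw [htsumc]; linarith
    obtain ⟨r, hr0, hr1, hKr, hPr⟩ := TUH.exists_radius hB1nn hc hScsum hsum' hwnn hw
    have hKA : Summable fun n : ℕ => ((n:ℝ)+2) * A (n+2) * r^(n+1) := TUH.sumK hA2 hSA hr0 hr1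
    have hKB : Summable fun n : ℕ => ((n:ℝ)+2) * B (n+2) * r^(n+1) := TUH.sumK hB2 hSB2 hr0 hr1
    have hPA : Summable fun n : ℕ => A (n+2) * r^(n+2) := TUH.sumP hA2 hSA hr0 hr1.le
    have hPB : Summable fun n : ℕ => B (n+2) * r^(n+2) := TUH.sumP hB2 hSB2 hr0 hr1.le
    have hsplitK : (∑' n : ℕ, ((n:ℝ)+2) * (A (n+2) + B (n+2)) * r^(n+1))
        = (∑' n : ℕ, ((n:ℝ)+2) * A (n+2) * r^(n+1))
          + ∑' n : ℕ, ((n:ℝ)+2) * B (n+2) * r^(n+1) := by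
      rw [← Summable.tsum_add hKA hKB]; exact tsum_congr (fun n => by ring)
    have hsplitP : (∑' n : ℕ, (A (n+2) + B (n+2)) * r^(n+2))
        = (∑' n : ℕ, A (n+2) * r^(n+2)) + ∑' n : ℕ, B (n+2) * r^(n+2) := by
      rw [← Summable.tsum_add hPA hPB]; exact tsum_congr (fun n => by ring)
    have hpow : ∀ z : ℂ, ‖z‖ ≤ r → ∀ n : ℕ, ‖z^(n+2)‖ ≤ r^(n+2) := fun z hz n => by
      rw [norm_pow]; exact pow_le_pow_left₀ (norm_nonneg z) hz _
    have hdecB : ∀ z : ℂ, ‖z‖ ≤ r → (∑' n : ℕ, (B (n+1) : ℂ) * z ^ (n+1))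
        = (B 1 : ℂ) * z + ∑' n : ℕ, (B (n+2) : ℂ) * z ^ (n+2) := by
      intro z hz
      have hz1 : ‖z‖ ≤ 1 := le_trans hz hr1.le
      have hzn : 0 ≤ ‖z‖ := norm_nonneg z
      have hsummBC : Summable fun n : ℕ => (B (n+1) : ℂ) * z ^ (n+1) := by
        apply TUH.summable_mul hB1 (v := fun n => ‖z‖^(n+1)) (fun n => by rw [norm_pow])
        refine Summable.of_nonneg_of_le (fun n => by have := hB1 n; positivity) (fun n => ?_) hSB
        have h1 : ‖z‖^(n+1) ≤ 1 := pow_le_one₀ hzn hz1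
        calc B (n+1) * ‖z‖^(n+1) ≤ B (n+1) * 1 := mul_le_mul_of_nonneg_left h1 (hB1 n)
          _ = B (n+1) := mul_one _
      rw [Summable.tsum_eq_zero_add hsummBC]
      norm_num
    set T : ℂ → ℂ := fun z => w + (∑' n : ℕ, (A (n+2) : ℂ) * z^(n+2))
        - starRingEnd ℂ (∑' n : ℕ, (B (n+1) : ℂ) * z^(n+1)) with hTdef
    have hself : ∀ z : ℂ, ‖z‖ ≤ r → ‖T z‖ ≤ r := by
      intro z hz
      have hSAz : ‖∑' n : ℕ, (A (n+2) : ℂ) * z^(n+2)‖ ≤ ∑' n : ℕ, A (n+2) * r^(n+2) :=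
        TUH.norm_tsum_mul_le hA2 (hpow z hz) hPA
      have hSB2z : ‖∑' n : ℕ, (B (n+2) : ℂ) * z^(n+2)‖ ≤ ∑' n : ℕ, B (n+2) * r^(n+2) :=
        TUH.norm_tsum_mul_le hB2 (hpow z hz) hPB
      have hSBz : ‖∑' n : ℕ, (B (n+1) : ℂ) * z^(n+1)‖
          ≤ B 1 * r + ∑' n : ℕ, B (n+2) * r^(n+2) := by
        rw [hdecB z hz]
        calc ‖(B 1 : ℂ) * z + ∑' n : ℕ, (B (n+2) : ℂ) * z ^ (n+2)‖
            ≤ ‖(B 1 : ℂ) * z‖ + ‖∑' n : ℕ, (B (n+2) : ℂ) * z ^ (n+2)‖ := norm_add_le _ _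
          _ ≤ B 1 * r + ∑' n : ℕ, B (n+2) * r^(n+2) := by
              rw [norm_mul, Complex.norm_real, Real.norm_eq_abs, _root_.abs_of_nonneg hB1nn]
              exact add_le_add (mul_le_mul_of_nonneg_left hz hB1nn) hSB2z
      have htri : ‖T z‖ ≤ ‖w‖ + ‖∑' n : ℕ, (A (n+2) : ℂ) * z^(n+2)‖
          + ‖∑' n : ℕ, (B (n+1) : ℂ) * z^(n+1)‖ := by
        simp only [hTdef]
        calc ‖w + (∑' n : ℕ, (A (n+2) : ℂ) * z^(n+2))
              - starRingEnd ℂ (∑' n : ℕ, (B (n+1) : ℂ) * z^(n+1))‖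
            ≤ ‖w + ∑' n : ℕ, (A (n+2) : ℂ) * z^(n+2)‖
              + ‖starRingEnd ℂ (∑' n : ℕ, (B (n+1) : ℂ) * z^(n+1))‖ := norm_sub_le _ _
          _ ≤ ‖w‖ + ‖∑' n : ℕ, (A (n+2) : ℂ) * z^(n+2)‖
              + ‖∑' n : ℕ, (B (n+1) : ℂ) * z^(n+1)‖ := by
              rw [RCLike.norm_conj]
              exact add_le_add_left (norm_add_le _ _) _
      rw [hsplitP] at hPr
      linarith
    have hKnn : 0 ≤ B 1 + ∑' n : ℕ, ((n:ℝ)+2) * (A (n+2) + B (n+2)) * r^(n+1) :=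
      TUH.Knonneg hB1nn hc r hr0
    have hlip : ∀ z z' : ℂ, ‖z‖ ≤ r → ‖z'‖ ≤ r →
        ‖T z - T z'‖ ≤ (B 1 + ∑' n : ℕ, ((n:ℝ)+2) * (A (n+2) + B (n+2)) * r^(n+1)) * ‖z - z'‖ := by
      intro z z' hz hz'
      have hzz' : 0 ≤ ‖z - z'‖ := norm_nonneg _
      have hAd : Summable fun n : ℕ => A (n+2) * (((n:ℝ)+2) * r^(n+1) * ‖z - z'‖) :=
        (hKA.mul_right ‖z - z'‖).congr (fun n => by ring)
      have hBd : Summable fun n : ℕ => B (n+2) * (((n:ℝ)+2) * r^(n+1) * ‖z - z'‖) :=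
        (hKB.mul_right ‖z - z'‖).congr (fun n => by ring)
      have hszA : Summable fun n : ℕ => (A (n+2) : ℂ) * z^(n+2) :=
        TUH.summable_mul hA2 (hpow z hz) hPA
      have hszA' : Summable fun n : ℕ => (A (n+2) : ℂ) * z'^(n+2) :=
        TUH.summable_mul hA2 (hpow z' hz') hPA
      have hszB : Summable fun n : ℕ => (B (n+2) : ℂ) * z^(n+2) :=
        TUH.summable_mul hB2 (hpow z hz) hPB
      have hszB' : Summable fun n : ℕ => (B (n+2) : ℂ) * z'^(n+2) :=
        TUH.summable_mul hB2 (hpow z' hz') hPB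
      have hSAd : ‖(∑' n : ℕ, (A (n+2) : ℂ) * z^(n+2)) - ∑' n : ℕ, (A (n+2) : ℂ) * z'^(n+2)‖
          ≤ (∑' n : ℕ, ((n:ℝ)+2) * A (n+2) * r^(n+1)) * ‖z - z'‖ := by
        rw [← Summable.tsum_sub hszA hszA',
          tsum_congr (fun n => show (A (n+2) : ℂ) * z^(n+2) - (A (n+2) : ℂ) * z'^(n+2)
            = (A (n+2) : ℂ) * (z^(n+2) - z'^(n+2)) by ring)]
        have h1 := TUH.norm_tsum_mul_le hA2 (fun n => TUH.norm_pow_sub_pow' hz hz' n) hAd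
        have h2 : (∑' n : ℕ, A (n+2) * (((n:ℝ)+2) * r^(n+1) * ‖z - z'‖))
            = (∑' n : ℕ, ((n:ℝ)+2) * A (n+2) * r^(n+1)) * ‖z - z'‖ := by
          rw [← tsum_mul_right]; exact tsum_congr (fun n => by ring)
        rw [h2] at h1
        exact h1
      have hSB2d : ‖(∑' n : ℕ, (B (n+2) : ℂ) * z^(n+2)) - ∑' n : ℕ, (B (n+2) : ℂ) * z'^(n+2)‖
          ≤ (∑' n : ℕ, ((n:ℝ)+2) * B (n+2) * r^(n+1)) * ‖z - z'‖ := by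
        rw [← Summable.tsum_sub hszB hszB',
          tsum_congr (fun n => show (B (n+2) : ℂ) * z^(n+2) - (B (n+2) : ℂ) * z'^(n+2)
            = (B (n+2) : ℂ) * (z^(n+2) - z'^(n+2)) by ring)]
        have h1 := TUH.norm_tsum_mul_le hB2 (fun n => TUH.norm_pow_sub_pow' hz hz' n) hBd
        have h2 : (∑' n : ℕ, B (n+2) * (((n:ℝ)+2) * r^(n+1) * ‖z - z'‖))
            = (∑' n : ℕ, ((n:ℝ)+2) * B (n+2) * r^(n+1)) * ‖z - z'‖ := by
          rw [← tsum_mul_right]; exact tsum_congr (fun n => by ring)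
        rw [h2] at h1
        exact h1
      have hSBd : ‖(∑' n : ℕ, (B (n+1) : ℂ) * z^(n+1)) - ∑' n : ℕ, (B (n+1) : ℂ) * z'^(n+1)‖
          ≤ (B 1 + ∑' n : ℕ, ((n:ℝ)+2) * B (n+2) * r^(n+1)) * ‖z - z'‖ := by
        rw [hdecB z hz, hdecB z' hz']
        rw [show ((B 1 : ℂ) * z + ∑' n : ℕ, (B (n+2) : ℂ) * z^(n+2))
            - ((B 1 : ℂ) * z' + ∑' n : ℕ, (B (n+2) : ℂ) * z'^(n+2))
            = (B 1 : ℂ) * (z - z')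
              + ((∑' n : ℕ, (B (n+2) : ℂ) * z^(n+2)) - ∑' n : ℕ, (B (n+2) : ℂ) * z'^(n+2)) by ring]
        calc ‖(B 1 : ℂ) * (z - z')
              + ((∑' n : ℕ, (B (n+2) : ℂ) * z^(n+2)) - ∑' n : ℕ, (B (n+2) : ℂ) * z'^(n+2))‖
            ≤ ‖(B 1 : ℂ) * (z - z')‖
              + ‖(∑' n : ℕ, (B (n+2) : ℂ) * z^(n+2)) - ∑' n : ℕ, (B (n+2) : ℂ) * z'^(n+2)‖ :=
            norm_add_le _ _
          _ ≤ B 1 * ‖z - z'‖ + (∑' n : ℕ, ((n:ℝ)+2) * B (n+2) * r^(n+1)) * ‖z - z'‖ := by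
              rw [norm_mul, Complex.norm_real, Real.norm_eq_abs, _root_.abs_of_nonneg hB1nn]
              exact add_le_add_right hSB2d _
          _ = (B 1 + ∑' n : ℕ, ((n:ℝ)+2) * B (n+2) * r^(n+1)) * ‖z - z'‖ := by ring
      have hTd : T z - T z'
          = ((∑' n : ℕ, (A (n+2) : ℂ) * z^(n+2)) - ∑' n : ℕ, (A (n+2) : ℂ) * z'^(n+2))
            - starRingEnd ℂ ((∑' n : ℕ, (B (n+1) : ℂ) * z^(n+1))
              - ∑' n : ℕ, (B (n+1) : ℂ) * z'^(n+1)) := by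
        simp only [hTdef]
        rw [map_sub]
        ring
      rw [hTd]
      calc ‖((∑' n : ℕ, (A (n+2) : ℂ) * z^(n+2)) - ∑' n : ℕ, (A (n+2) : ℂ) * z'^(n+2))
            - starRingEnd ℂ ((∑' n : ℕ, (B (n+1) : ℂ) * z^(n+1))
              - ∑' n : ℕ, (B (n+1) : ℂ) * z'^(n+1))‖
          ≤ ‖(∑' n : ℕ, (A (n+2) : ℂ) * z^(n+2)) - ∑' n : ℕ, (A (n+2) : ℂ) * z'^(n+2)‖
            + ‖(∑' n : ℕ, (B (n+1) : ℂ) * z^(n+1)) - ∑' n : ℕ, (B (n+1) : ℂ) * z'^(n+1)‖ := by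
            rw [← RCLike.norm_conj ((∑' n : ℕ, (B (n+1) : ℂ) * z^(n+1))
              - ∑' n : ℕ, (B (n+1) : ℂ) * z'^(n+1))]
            exact norm_sub_le _ _
        _ ≤ (∑' n : ℕ, ((n:ℝ)+2) * A (n+2) * r^(n+1)) * ‖z - z'‖
            + (B 1 + ∑' n : ℕ, ((n:ℝ)+2) * B (n+2) * r^(n+1)) * ‖z - z'‖ := add_le_add hSAd hSBd
        _ = (B 1 + ((∑' n : ℕ, ((n:ℝ)+2) * A (n+2) * r^(n+1))
            + ∑' n : ℕ, ((n:ℝ)+2) * B (n+2) * r^(n+1))) * ‖z - z'‖ := by ring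
        _ = (B 1 + ∑' n : ℕ, ((n:ℝ)+2) * (A (n+2) + B (n+2)) * r^(n+1)) * ‖z - z'‖ := by
            rw [hsplitK]
    -- Banach fixed point
    haveI : CompleteSpace (Metric.closedBall (0:ℂ) r) :=
      Metric.isClosed_closedBall.completeSpace_coe
    haveI : Nonempty (Metric.closedBall (0:ℂ) r) := ⟨⟨0, Metric.mem_closedBall_self hr0⟩⟩
    have hmem : ∀ x : Metric.closedBall (0:ℂ) r, ‖(x:ℂ)‖ ≤ r :=
      fun x => mem_closedBall_zero_iff.mp x.2
    set K0 : NNReal := ⟨B 1 + ∑' n : ℕ, ((n:ℝ)+2) * (A (n+2) + B (n+2)) * r^(n+1), hKnn⟩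
      with hK0def
    set T' : Metric.closedBall (0:ℂ) r → Metric.closedBall (0:ℂ) r :=
      fun x => ⟨T x, mem_closedBall_zero_iff.mpr (hself x (hmem x))⟩ with hT'def
    have hlipT' : LipschitzWith K0 T' := by
      apply LipschitzWith.of_dist_le_mul
      intro x y
      have h1 : dist (T' x) (T' y) = dist (T (x:ℂ)) (T (y:ℂ)) := Subtype.dist_eq _ _
      have h2 : dist x y = dist (x:ℂ) (y:ℂ) := Subtype.dist_eq x y
      rw [h1, h2, dist_eq_norm, dist_eq_norm]
      exact hlip _ _ (hmem x) (hmem y)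
    have hK01 : K0 < 1 := by
      rw [← NNReal.coe_lt_coe]
      exact hKr
    have hcontr : ContractingWith K0 T' := ⟨hK01, hlipT'⟩
    set x : Metric.closedBall (0:ℂ) r := ContractingWith.fixedPoint T' hcontr with hxdef
    have hfix : T' x = x := hcontr.fixedPoint_isFixedPt
    refine ⟨(x : ℂ), lt_of_le_of_lt (hmem x) hr1, ?_⟩
    have hTz : T (x : ℂ) = (x : ℂ) := by
      have := congrArg Subtype.val hfix
      simpa [hT'def] using this
    simp only [hTdef] at hTz
    linear_combination -hTz
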